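/- arXiv:2107.03219 — 2 statements merged into one kernel-verified Lean document; each statement's English description precedes it below -/
import Mathlib

section
/- In the setting of the inviscid representation p(u;x,t) = p₀(Y(t;u,x); X(t;u,x)) q(t;u,x): if there exists m ≥ 1 such that p₀(u;x)|u|^m → 0 uniformly in x as |u| → ∞, and Q has linear growth |Q(x,u,r)| ≤ K₂(1+|u|), then p(u;x,t)|u|^m → 0 uniformly in x as |u| → ∞, for each fixed t. -/
open Set

noncomputable section

abbrev E3 := EuclideanSpace ℝ (Fin 3)

def e3 (k : Fin 3) : E3 := EuclideanSpace.single k 1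

def pd (f : E3 → ℝ) (x : E3) (i : Fin 3) : ℝ := fderiv ℝ f x (e3 i)

def divU (Q : E3 → E3 → ℝ → E3) (x u : E3) (t : ℝ) : ℝ :=
  ∑ k, pd (fun w => Q x w t k) u k

lemma coord_abs_le_norm' (v : E3) (k : Fin 3) : |v k| ≤ ‖v‖ := by
  rw [EuclideanSpace.norm_eq, ← Real.sqrt_sq_eq_abs]
  apply Real.sqrt_le_sqrt
  calc (v k)^2 = ‖v k‖^2 := by rw [Real.norm_eq_abs, sq_abs]
  _ ≤ ∑ i, ‖v i‖^2 :=
    Finset.single_le_sum (f := fun i => ‖v i‖^2) (fun i _ => sq_nonneg _) (Finset.mem_univ k)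

lemma pd_le_of_lip (K1 : ℝ) (hK1 : 0 ≤ K1) (f : E3 → E3) (hf : ContDiff ℝ 1 f)
    (hlip : LipschitzWith (Real.toNNReal K1) f) (u : E3) (k : Fin 3) :
    |pd (fun w => f w k) u k| ≤ K1 := by
  have hdf : DifferentiableAt ℝ f u := (hf.differentiable one_ne_zero) u
  have hcomp : HasFDerivAt (fun w => f w k)
      ((EuclideanSpace.proj k).comp (fderiv ℝ f u)) u :=
    (EuclideanSpace.proj (𝕜 := ℝ) k).hasFDerivAt.comp u hdf.hasFDerivAt
  rw [pd, hcomp.fderiv]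
  have h1 : ((EuclideanSpace.proj (𝕜 := ℝ) k).comp (fderiv ℝ f u)) (e3 k)
      = (fderiv ℝ f u (e3 k)) k := rfl
  rw [h1]
  refine (coord_abs_le_norm' _ k).trans ?_
  calc ‖fderiv ℝ f u (e3 k)‖ ≤ ‖fderiv ℝ f u‖ * ‖e3 k‖ := (fderiv ℝ f u).le_opNorm _
  _ ≤ K1 * 1 := by
      have he : ‖e3 k‖ = 1 := by simp [e3, EuclideanSpace.norm_single]
      rw [he]
      have := norm_fderiv_le_of_lipschitz ℝ hlip (x₀ := u)
      rw [Real.coe_toNNReal _ hK1] at this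
      simpa using this
  _ = K1 := mul_one _

lemma q_gronwall (t L : ℝ) (ht0 : 0 ≤ t) (q : ℝ → ℝ) (d : ℝ → ℝ)
    (hq0 : q 0 = 1)
    (hq : ∀ s ∈ Icc 0 t, HasDerivAt q (q s * d s) s)
    (hd : ∀ s ∈ Icc 0 t, |d s| ≤ L) :
    |q t| ≤ Real.exp (L * t) := by
  have hcont : ContinuousOn q (Icc 0 t) := fun s hs =>
    (hq s hs).continuousAt.continuousWithinAt
  have := norm_le_gronwallBound_of_norm_deriv_right_le (f' := fun s => q s * d s)
    (δ := 1) (K := L) (ε := 0) hcont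
    (fun s hs => (hq s (Ico_subset_Icc_self hs)).hasDerivWithinAt)
    (by simp [hq0])
    (fun s hs => by
      simp only [Real.norm_eq_abs, abs_mul, add_zero]
      calc |q s| * |d s| ≤ |q s| * L :=
            mul_le_mul_of_nonneg_left (hd s (Ico_subset_Icc_self hs)) (abs_nonneg _)
      _ = L * |q s| := mul_comm _ _)
    t (right_mem_Icc.2 ht0)
  rwa [gronwallBound_ε0, sub_zero, one_mul, Real.norm_eq_abs] at this

lemma Y_reverse_gronwall (t K₂ K : ℝ) (ht0 : 0 ≤ t) (hK2 : K₂ ≤ K) (hK : 0 < K)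
    (u : E3) (Y : ℝ → E3) (F : ℝ → E3)
    (hY0 : Y 0 = u)
    (hY : ∀ s ∈ Icc 0 t, HasDerivAt Y (F s) s)
    (hF : ∀ s ∈ Icc 0 t, ‖F s‖ ≤ K₂ * (1 + ‖Y s‖)) :
    ‖u‖ ≤ (‖Y t‖ + 1) * Real.exp (K * t) := by
  set g : ℝ → E3 := fun s => Y (t - s) with hg
  have hgd : ∀ s ∈ Icc (0:ℝ) t, HasDerivAt g ((-1 : ℝ) • F (t - s)) s := by
    intro s hs
    have h1 : HasDerivAt (fun s : ℝ => t - s) (-1) s := by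
      simpa using (hasDerivAt_id s).const_sub t
    exact (hY (t - s) ⟨by linarith [hs.2], by linarith [hs.1]⟩).scomp s h1
  have hcont : ContinuousOn g (Icc 0 t) := fun s hs =>
    (hgd s hs).continuousAt.continuousWithinAt
  have key := norm_le_gronwallBound_of_norm_deriv_right_le
    (f' := fun s => (-1 : ℝ) • F (t - s)) (δ := ‖Y t‖) (K := K) (ε := K) hcont
    (fun s hs => (hgd s (Ico_subset_Icc_self hs)).hasDerivWithinAt)
    (by simp [hg])
    (fun s hs => by
      have hs' : t - s ∈ Icc (0:ℝ) t := ⟨by linarith [hs.2], by linarith [hs.1]⟩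
      have := hF (t - s) hs'
      rw [norm_smul]
      simp only [norm_neg, norm_one, one_mul]
      calc ‖F (t-s)‖ ≤ K₂ * (1 + ‖Y (t-s)‖) := this
      _ ≤ K * (1 + ‖g s‖) := by
          have : (0:ℝ) ≤ 1 + ‖Y (t-s)‖ := by positivity
          exact mul_le_mul_of_nonneg_right hK2 this
      _ = K * ‖g s‖ + K := by ring)
    t (right_mem_Icc.2 ht0)
  have hgt : g t = u := by simp [hg, hY0]
  rw [hgt, gronwallBound_of_K_ne_0 hK.ne'] at key
  have hKK : K / K = 1 := div_self hK.ne'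
  rw [hKK, sub_zero] at key
  have key' : ‖u‖ ≤ ‖Y t‖ * Real.exp (K * t) + 1 * (Real.exp (K * t) - 1) := key
  nlinarith [key', Real.exp_pos (K * t)]

/-- in the inviscid representation p(u;x,t) = p₀(Y(t);X(t))q(t), if
|u|^m p₀(u;x) → 0 uniformly in x as |u| → ∞ (m ≥ 1) and Q has linear growth, then
|u|^m p(u;x,t) → 0 uniformly in x as |u| → ∞, for each fixed t. -/
theorem inviscid_pdf_decay
    (T K₁ K₂ : ℝ) (hT : 0 < T) (m : ℝ) (hm : 1 ≤ m)
    (Q : E3 → E3 → ℝ → E3)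
    (hLip : ∀ (x y u w : E3) (t : ℝ), t ∈ Icc 0 T →
      ‖Q x u t - Q y w t‖ ≤ K₁ * (‖x - y‖ + ‖u - w‖))
    (hGrowth : ∀ (x u : E3) (t : ℝ), t ∈ Icc 0 T → ‖Q x u t‖ ≤ K₂ * (1 + ‖u‖))
    (hQC1 : ∀ (x : E3) (t : ℝ), ContDiff ℝ 1 (fun w => Q x w t))
    (t : ℝ) (ht : t ∈ Icc 0 T)
    -- the flow (X,Y,q), depending on the initial data (u,x)
    (X Y : E3 → E3 → ℝ → E3) (q : E3 → E3 → ℝ → ℝ)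
    (hX0 : ∀ u x, X u x 0 = x) (hY0 : ∀ u x, Y u x 0 = u) (hq0 : ∀ u x, q u x 0 = 1)
    (hX : ∀ u x, ∀ s ∈ Icc 0 t, HasDerivAt (X u x) (-(Y u x s)) s)
    (hY : ∀ u x, ∀ s ∈ Icc 0 t, HasDerivAt (Y u x) (Q (X u x s) (Y u x s) (t - s)) s)
    (hq : ∀ u x, ∀ s ∈ Icc 0 t,
      HasDerivAt (q u x) (q u x s * divU Q (X u x s) (Y u x s) (t - s)) s)
    (p : E3 → E3 → ℝ → ℝ) (p₀ : E3 → E3 → ℝ)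
    (hrep : ∀ u x, p u x t = p₀ (Y u x t) (X u x t) * q u x t)
    (hdecay : ∀ ε > 0, ∃ R : ℝ, ∀ (u x : E3), R ≤ ‖u‖ → |p₀ u x| * ‖u‖ ^ m ≤ ε) :
    ∀ ε > 0, ∃ R : ℝ, ∀ (u x : E3), R ≤ ‖u‖ → |p u x t| * ‖u‖ ^ m ≤ ε := by
  intro ε hε
  have ht0 : 0 ≤ t := ht.1
  set K1' : ℝ := max K₁ 0 with hK1'def
  have hK1' : 0 ≤ K1' := le_max_right _ _
  set L : ℝ := 3 * K1' with hLdef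
  have hL : 0 ≤ L := by positivity
  set K : ℝ := max K₂ 1 with hKdef
  have hK : 0 < K := lt_of_lt_of_le one_pos (le_max_right _ _)
  have hm0 : 0 ≤ m := le_trans zero_le_one hm
  -- divergence bound
  have hdiv : ∀ (x u : E3) (s : ℝ), s ∈ Icc (0:ℝ) T → |divU Q x u s| ≤ L := by
    intro x u s hs
    have hlip : LipschitzWith (Real.toNNReal K1') (fun w => Q x w s) := by
      apply LipschitzWith.of_dist_le_mul
      intro a b
      rw [dist_eq_norm, dist_eq_norm]
      calc ‖Q x a s - Q x b s‖ ≤ K₁ * (‖x - x‖ + ‖a - b‖) := hLip x x a b s hs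
      _ = K₁ * ‖a - b‖ := by simp
      _ ≤ K1' * ‖a - b‖ := mul_le_mul_of_nonneg_right (le_max_left _ _) (norm_nonneg _)
      _ = (Real.toNNReal K1') * ‖a - b‖ := by rw [Real.coe_toNNReal _ hK1']
    have hterm : ∀ k : Fin 3, |pd (fun w => Q x w s k) u k| ≤ K1' := fun k =>
      pd_le_of_lip K1' hK1' (fun w => Q x w s) (hQC1 x s) hlip u k
    calc |divU Q x u s| ≤ ∑ k, |pd (fun w => Q x w s k) u k| :=
          Finset.abs_sum_le_sum_abs _ _
    _ ≤ ∑ _k : Fin 3, K1' := Finset.sum_le_sum (fun k _ => hterm k)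
    _ = 3 * K1' := by simp
  -- q bound
  have hqb : ∀ u x : E3, |q u x t| ≤ Real.exp (L * t) := by
    intro u x
    apply q_gronwall t L ht0 (q u x)
      (fun s => divU Q (X u x s) (Y u x s) (t - s)) (hq0 u x) (hq u x)
    intro s hs
    exact hdiv _ _ _ ⟨by linarith [hs.2], by linarith [hs.1, ht.2]⟩
  -- lower bound on ‖Y t‖ via reverse Gronwall
  have hYb : ∀ u x : E3, ‖u‖ ≤ (‖Y u x t‖ + 1) * Real.exp (K * t) := by
    intro u x
    apply Y_reverse_gronwall t K₂ K ht0 (le_max_left _ _) hK u (Y u x)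
      (fun s => Q (X u x s) (Y u x s) (t - s)) (hY0 u x) (hY u x)
    intro s hs
    exact hGrowth _ _ _ ⟨by linarith [hs.2], by linarith [hs.1, ht.2]⟩
  -- assemble
  set C : ℝ := Real.exp (L * t) * ((2:ℝ) ^ m * Real.exp (K * t) ^ m) with hCdef
  have hC : 0 < C := by
    have h1 : (0:ℝ) < (2:ℝ) ^ m := Real.rpow_pos_of_pos two_pos m
    have h2 : (0:ℝ) < Real.exp (K * t) ^ m := Real.rpow_pos_of_pos (Real.exp_pos _) m
    positivity
  obtain ⟨R₀, hR₀⟩ := hdecay (ε / C) (div_pos hε hC)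
  refine ⟨(max R₀ 1 + 1) * Real.exp (K * t), fun u x hu => ?_⟩
  set R₁ : ℝ := max R₀ 1 with hR₁def
  have hexp : (0:ℝ) < Real.exp (K * t) := Real.exp_pos _
  have hY1 : R₁ ≤ ‖Y u x t‖ := by
    have h := hYb u x
    nlinarith [h, hu]
  have hY2 : (1:ℝ) ≤ ‖Y u x t‖ := le_trans (le_max_right _ _) hY1
  have hum : ‖u‖ ^ m ≤ (2:ℝ) ^ m * ‖Y u x t‖ ^ m * Real.exp (K * t) ^ m := by
    have h1 : ‖u‖ ≤ (2 * ‖Y u x t‖) * Real.exp (K * t) := by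
      have := hYb u x
      nlinarith [this, hexp]
    calc ‖u‖ ^ m ≤ ((2 * ‖Y u x t‖) * Real.exp (K * t)) ^ m :=
          Real.rpow_le_rpow (norm_nonneg _) h1 hm0
    _ = (2:ℝ) ^ m * ‖Y u x t‖ ^ m * Real.exp (K * t) ^ m := by
        rw [Real.mul_rpow (by positivity) hexp.le,
          Real.mul_rpow (by norm_num) (by positivity)]
  have hp₀ : |p₀ (Y u x t) (X u x t)| * ‖Y u x t‖ ^ m ≤ ε / C :=
    hR₀ _ _ (le_trans (le_max_left _ _) hY1)
  rw [hrep u x, abs_mul]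
  have hYm : (0:ℝ) ≤ ‖Y u x t‖ ^ m := Real.rpow_nonneg (norm_nonneg _) m
  calc |p₀ (Y u x t) (X u x t)| * |q u x t| * ‖u‖ ^ m
      ≤ |p₀ (Y u x t) (X u x t)| * Real.exp (L * t)
        * ((2:ℝ) ^ m * ‖Y u x t‖ ^ m * Real.exp (K * t) ^ m) := by
        apply mul_le_mul
        · exact mul_le_mul_of_nonneg_left (hqb u x) (abs_nonneg _)
        · exact hum
        · exact Real.rpow_nonneg (norm_nonneg _) m
        · positivity
  _ = (|p₀ (Y u x t) (X u x t)| * ‖Y u x t‖ ^ m) * C := by rw [hCdef]; ring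
  _ ≤ (ε / C) * C := mul_le_mul_of_nonneg_right hp₀ hC.le
  _ = ε := div_mul_cancel₀ ε hC.ne'
end
end

section
/- Let a < 0 < b with a² > b, and set λ₁ = a + √(a²−b), λ₂ = a − √(a²−b). Then λ₁ and λ₂ are both negative, λ₂/λ₁ > 1, and s := ln(λ₂/λ₁)/(λ₁−λ₂) > 0; moreover the (1,1) entry of exp(Ls), namely (−λ₁e^{λ₁s} + λ₂e^{λ₂s})/(λ₂−λ₁), equals 0, where L = [[2a, b],[−1, 0]]. -/
noncomputable section

set_option maxHeartbeats 1000000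

/-- for a < 0 < b with a² > b, both eigenvalues λ₁ = a + √(a²-b) and
λ₂ = a - √(a²-b) of L = [[2a,b],[-1,0]] are negative, λ₂/λ₁ > 1, the time
s = ln(λ₂/λ₁)/(λ₁-λ₂) is positive, and the (1,1) entry of exp(Ls) vanishes. -/
theorem exp_entry_vanishes
    (a b : ℝ) (ha : a < 0) (hb : 0 < b) (hab : b < a ^ 2) :
    let L : Matrix (Fin 2) (Fin 2) ℝ := !![2 * a, b; -1, 0]
    let l₁ : ℝ := a + Real.sqrt (a ^ 2 - b)
    let l₂ : ℝ := a - Real.sqrt (a ^ 2 - b)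
    let s : ℝ := Real.log (l₂ / l₁) / (l₁ - l₂)
    l₁ < 0 ∧ l₂ < 0 ∧ 1 < l₂ / l₁ ∧ 0 < s ∧
    (-l₁ * Real.exp (l₁ * s) + l₂ * Real.exp (l₂ * s)) / (l₂ - l₁) = 0 ∧
    NormedSpace.exp (s • L) 0 0 = 0 := by
  intro L l₁ l₂ s
  set r : ℝ := Real.sqrt (a ^ 2 - b) with hr_def
  have hr2 : r ^ 2 = a ^ 2 - b := Real.sq_sqrt (by linarith)
  have hr0 : 0 < r := Real.sqrt_pos.2 (by linarith)
  have hra : r < -a := by nlinarith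
  have hl₁ : l₁ < 0 := by simp only [l₁, ← hr_def]; linarith
  have hl₂ : l₂ < 0 := by simp only [l₂, ← hr_def]; linarith
  have hl21 : l₂ < l₁ := by simp only [l₁, l₂, ← hr_def]; linarith
  have hl₁ne : l₁ ≠ 0 := ne_of_lt hl₁
  have hratio : 1 < l₂ / l₁ := (one_lt_div_of_neg hl₁).2 hl21
  have hdiff : 0 < l₁ - l₂ := by linarith
  have hs : 0 < s := div_pos (Real.log_pos hratio) hdiff
  have hexp_log : Real.exp (Real.log (l₂ / l₁)) = l₂ / l₁ :=
    Real.exp_log (by linarith)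
  have hkey : l₁ * Real.exp (l₁ * s) = l₂ * Real.exp (l₂ * s) := by
    have h1 : l₁ * s = l₂ * s + Real.log (l₂ / l₁) := by
      have : (l₁ - l₂) * s = Real.log (l₂ / l₁) := by
        simp only [s]
        field_simp [ne_of_gt hdiff]
      linarith [this]
    rw [h1, Real.exp_add, hexp_log]
    field_simp
  have hnum : (-l₁ * Real.exp (l₁ * s) + l₂ * Real.exp (l₂ * s)) / (l₂ - l₁) = 0 := by
    rw [div_eq_zero_iff]; left; linarith [hkey]
  refine ⟨hl₁, hl₂, hratio, hs, hnum, ?_⟩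
  -- matrix part
  set P : Matrix (Fin 2) (Fin 2) ℝ := !![l₁, l₂; -1, -1] with hP_def
  set D : Matrix (Fin 2) (Fin 2) ℝ := Matrix.diagonal ![s * l₁, s * l₂] with hD_def
  have hdet : P.det = l₂ - l₁ := by
    simp [hP_def, Matrix.det_fin_two_of]; ring
  have hdetne : P.det ≠ 0 := by rw [hdet]; linarith
  have hdetUnit : IsUnit P.det := isUnit_iff_ne_zero.2 hdetne
  have hPunit : IsUnit P := (Matrix.isUnit_iff_isUnit_det P).2 hdetUnit
  have heig₁ : l₁ ^ 2 - 2 * a * l₁ + b = 0 := by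
    simp only [l₁, ← hr_def]; nlinarith [hr2]
  have heig₂ : l₂ ^ 2 - 2 * a * l₂ + b = 0 := by
    simp only [l₂, ← hr_def]; nlinarith [hr2]
  have hD2 : D = !![s * l₁, 0; 0, s * l₂] := by
    ext i j
    fin_cases i <;> fin_cases j <;> simp [hD_def]
  have hsL : s • L = !![s * (2 * a), s * b; s * (-1), s * 0] := by
    ext i j
    fin_cases i <;> fin_cases j <;> simp [L, Matrix.smul_apply]
  have h1 : (s • L) * P = P * D := by
    rw [hsL, hD2, hP_def, Matrix.mul_fin_two, Matrix.mul_fin_two]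
    ext i j
    fin_cases i <;> fin_cases j <;> simp <;> nlinarith [heig₁, heig₂]
  have hconj : s • L = P * D * P⁻¹ := by
    have := congrArg (fun M => M * P⁻¹) h1
    simpa [Matrix.mul_nonsing_inv_cancel_right _ _ hdetUnit] using this
  have hPinv : P⁻¹ = (l₂ - l₁)⁻¹ • !![-1, -l₂; 1, l₁] := by
    rw [Matrix.inv_def, Matrix.adjugate_fin_two, hdet, Ring.inverse_eq_inv]
    simp [hP_def]
  rw [hconj, Matrix.exp_conj P D hPunit, hD_def, Matrix.exp_diagonal, hPinv]
  have hpi : (NormedSpace.exp (![s * l₁, s * l₂] : Fin 2 → ℝ)) =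
      ![Real.exp (s * l₁), Real.exp (s * l₂)] := by
    ext i
    rw [Pi.coe_exp, ← Real.exp_eq_exp_ℝ]
    fin_cases i <;> simp
  rw [hpi]
  have hdiag : Matrix.diagonal ![Real.exp (s * l₁), Real.exp (s * l₂)] =
      !![Real.exp (s * l₁), 0; 0, Real.exp (s * l₂)] := by
    ext i j
    fin_cases i <;> fin_cases j <;> simp
  have hsm : ((l₂ - l₁)⁻¹ • !![(-1 : ℝ), -l₂; 1, l₁]) =
      !![(l₂ - l₁)⁻¹ * (-1), (l₂ - l₁)⁻¹ * (-l₂); (l₂ - l₁)⁻¹ * 1,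
        (l₂ - l₁)⁻¹ * l₁] := by
    ext i j
    fin_cases i <;> fin_cases j <;> simp [Matrix.smul_apply]
  rw [hdiag, hsm, hP_def, Matrix.mul_fin_two, Matrix.mul_fin_two]
  simp only [Matrix.cons_val', Matrix.cons_val_zero, Matrix.empty_val',
    Matrix.cons_val_fin_one, Matrix.of_apply]
  have e₁ : Real.exp (s * l₁) = Real.exp (l₁ * s) := by rw [mul_comm]
  have e₂ : Real.exp (s * l₂) = Real.exp (l₂ * s) := by rw [mul_comm]
  rw [e₁, e₂]
  clear_value s r l₁ l₂
  linear_combination (l₂ - l₁)⁻¹ * hkey.symm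

end
end
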